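/- arXiv:2107.05554 — 4 statements merged into one kernel-verified Lean document; each statement's English description precedes it below -/
import Mathlib

section
/- Corrupted-step noise bound: under the hypotheses of Lemma 1, if index i lies in the q-quantile set (i.e., |⟨x_k, a_i⟩ - b_i| ≤ Q where Q is the q-quantile of the residuals), then the update vector v = (b_i - ⟨x_k, a_i⟩)a_i satisfies ‖v‖² ≤ σ_max(A)² ‖x_k - x‖² / (m(1 - q - β)). -/
open RealInnerProductSpace Finset

/-- The largest singular value of the matrix with rows `a i`. -/
noncomputable def sigmaMax {m n : ℕ} (a : Fin m → EuclideanSpace ℝ (Fin n)) : ℝ :=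
  sSup {t : ℝ | ∃ y : EuclideanSpace ℝ (Fin n), ‖y‖ = 1 ∧
    t = Real.sqrt (∑ i, ⟪a i, y⟫ ^ 2)}

lemma sum_inner_sq_le_sigmaMax {m n : ℕ} (a : Fin m → EuclideanSpace ℝ (Fin n))
    (ha : ∀ j, ‖a j‖ = 1) (y : EuclideanSpace ℝ (Fin n)) :
    ∑ j, ⟪a j, y⟫ ^ 2 ≤ sigmaMax a ^ 2 * ‖y‖ ^ 2 := by
  by_cases hy : y = 0
  · simp [hy]
  · set u : EuclideanSpace ℝ (Fin n) := ‖y‖⁻¹ • y with hu_def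
    have hu : ‖u‖ = 1 := norm_smul_inv_norm hy
    have hbdd : BddAbove {t : ℝ | ∃ z : EuclideanSpace ℝ (Fin n), ‖z‖ = 1 ∧
        t = Real.sqrt (∑ i, ⟪a i, z⟫ ^ 2)} := by
      refine ⟨Real.sqrt m, ?_⟩
      rintro t ⟨z, hz, rfl⟩
      apply Real.sqrt_le_sqrt
      calc ∑ i, ⟪a i, z⟫ ^ 2 ≤ ∑ _i : Fin m, (1 : ℝ) := by
            apply Finset.sum_le_sum
            intro j _
            have h1 : |⟪a j, z⟫| ≤ ‖a j‖ * ‖z‖ := abs_real_inner_le_norm _ _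
            rw [ha j, hz, one_mul] at h1
            calc ⟪a j, z⟫ ^ 2 = |⟪a j, z⟫| ^ 2 := (sq_abs _).symm
              _ ≤ 1 ^ 2 := by gcongr
              _ = 1 := one_pow 2
        _ = m := by simp
    have hmem : Real.sqrt (∑ j, ⟪a j, u⟫ ^ 2) ∈ {t : ℝ | ∃ z : EuclideanSpace ℝ (Fin n),
        ‖z‖ = 1 ∧ t = Real.sqrt (∑ i, ⟪a i, z⟫ ^ 2)} := ⟨u, hu, rfl⟩
    have hle : Real.sqrt (∑ j, ⟪a j, u⟫ ^ 2) ≤ sigmaMax a := le_csSup hbdd hmem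
    have hsq : ∑ j, ⟪a j, u⟫ ^ 2 ≤ sigmaMax a ^ 2 := by
      have h2 : Real.sqrt (∑ j, ⟪a j, u⟫ ^ 2) ^ 2 ≤ sigmaMax a ^ 2 :=
        pow_le_pow_left₀ (Real.sqrt_nonneg _) hle 2
      rwa [Real.sq_sqrt (Finset.sum_nonneg fun j _ => sq_nonneg _)] at h2
    have hyu : y = ‖y‖ • u := by
      rw [hu_def, smul_smul, mul_inv_cancel₀ (norm_ne_zero_iff.mpr hy), one_smul]
    have key : ∑ j, ⟪a j, y⟫ ^ 2 = ‖y‖ ^ 2 * ∑ j, ⟪a j, u⟫ ^ 2 := by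
      rw [Finset.mul_sum]
      apply Finset.sum_congr rfl
      intro j _
      have h4 : ⟪a j, u⟫ = ‖y‖⁻¹ * ⟪a j, y⟫ := real_inner_smul_right _ _ _
      have hny : ‖y‖ ≠ 0 := norm_ne_zero_iff.mpr hy
      rw [h4]
      field_simp
    rw [key]
    have h5 : ‖y‖ ^ 2 * ∑ j, ⟪a j, u⟫ ^ 2 ≤ ‖y‖ ^ 2 * sigmaMax a ^ 2 :=
      mul_le_mul_of_nonneg_left hsq (sq_nonneg _)
    linarith

/-- corrupted-step noise bound. -/
theorem corrupted_step_noise_bound {m n : ℕ} (a : Fin m → EuclideanSpace ℝ (Fin n))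
    (x xk : EuclideanSpace ℝ (Fin n)) (bt b : Fin m → ℝ) (q β Q : ℝ) (i : Fin m)
    (ha : ∀ j, ‖a j‖ = 1)
    (hbt : ∀ j, ⟪a j, x⟫ = bt j)
    (hβ : 0 ≤ β)
    (hcorr : ((univ.filter fun j => b j ≠ bt j).card : ℝ) ≤ β * m)
    (hq : 0 < q) (hq1 : q < 1 - β)
    (hQ : 0 ≤ Q)
    (hquant : (1 - q) * m ≤ ((univ.filter fun j => Q ≤ |⟪a j, xk⟫ - b j|).card : ℝ))
    (hi : |⟪a i, xk⟫ - b i| ≤ Q) :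
    ‖(b i - ⟪a i, xk⟫) • a i‖ ^ 2 ≤
      sigmaMax a ^ 2 * ‖xk - x‖ ^ 2 / (m * (1 - q - β)) := by
  have hm : 0 < (m : ℝ) := by exact_mod_cast i.pos
  have hqβ : 0 < 1 - q - β := by linarith
  have hden : 0 < (m : ℝ) * (1 - q - β) := mul_pos hm hqβ
  set S := univ.filter fun j => Q ≤ |⟪a j, xk⟫ - b j| with hS
  set C := univ.filter fun j => b j ≠ bt j with hC
  set T := S \ C with hT
  have hcardT : (1 - q - β) * m ≤ (T.card : ℝ) := by
    have h1 : S.card ≤ (S \ C).card + C.card := Finset.card_le_card_sdiff_add_card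
    have h1' : (S.card : ℝ) ≤ ((S \ C).card : ℝ) + C.card := by exact_mod_cast h1
    linarith [hquant]
  -- for j ∈ T, Q ≤ |⟪a j, xk - x⟫|
  have hTQ : ∀ j ∈ T, Q ^ 2 ≤ ⟪a j, xk - x⟫ ^ 2 := by
    intro j hj
    rw [hT, Finset.mem_sdiff] at hj
    obtain ⟨hjS, hjC⟩ := hj
    rw [hS, Finset.mem_filter] at hjS
    rw [hC, Finset.mem_filter] at hjC
    push_neg at hjC
    have hbj : b j = bt j := hjC (Finset.mem_univ j)
    have h2 : Q ≤ |⟪a j, xk - x⟫| := by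
      have := hjS.2
      rwa [hbj, ← hbt j, ← inner_sub_right] at this
    calc Q ^ 2 ≤ |⟪a j, xk - x⟫| ^ 2 := by gcongr
      _ = ⟪a j, xk - x⟫ ^ 2 := sq_abs _
  have hsum : (T.card : ℝ) * Q ^ 2 ≤ ∑ j, ⟪a j, xk - x⟫ ^ 2 := by
    calc (T.card : ℝ) * Q ^ 2 = ∑ _j ∈ T, Q ^ 2 := by
          rw [Finset.sum_const, nsmul_eq_mul]
      _ ≤ ∑ j ∈ T, ⟪a j, xk - x⟫ ^ 2 := Finset.sum_le_sum hTQ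
      _ ≤ ∑ j, ⟪a j, xk - x⟫ ^ 2 := by
          apply Finset.sum_le_sum_of_subset_of_nonneg (Finset.subset_univ T)
          intro j _ _; exact sq_nonneg _
  have hsig := sum_inner_sq_le_sigmaMax a ha (xk - x)
  have hQbound : Q ^ 2 * ((m : ℝ) * (1 - q - β)) ≤ sigmaMax a ^ 2 * ‖xk - x‖ ^ 2 := by
    have h3 : (1 - q - β) * m * Q ^ 2 ≤ (T.card : ℝ) * Q ^ 2 := by
      apply mul_le_mul_of_nonneg_right hcardT (sq_nonneg _)
    nlinarith [sq_nonneg Q]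
  have hv : ‖(b i - ⟪a i, xk⟫) • a i‖ ^ 2 ≤ Q ^ 2 := by
    rw [norm_smul, ha i, mul_one, Real.norm_eq_abs]
    have h6 : |b i - ⟪a i, xk⟫| ≤ Q := by rwa [abs_sub_comm]
    exact pow_le_pow_left₀ (abs_nonneg _) h6 2
  rw [le_div_iff₀ hden]
  calc ‖(b i - ⟪a i, xk⟫) • a i‖ ^ 2 * ((m : ℝ) * (1 - q - β))
      ≤ Q ^ 2 * ((m : ℝ) * (1 - q - β)) := by gcongr
    _ ≤ sigmaMax a ^ 2 * ‖xk - x‖ ^ 2 := hQbound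
end

section
/- Cross-term estimate: Let S ⊆ {1,…,m} be nonempty with |⟨x_k, a_i⟩ - b_i| ≤ Q for all i ∈ S, where Q ≤ σ_max ‖x_k - x‖/(√m √(1-q-β)). Then (1/|S|) Σ_{i∈S} 2(b_i - ⟨x_k, a_i⟩)⟨x_k - x, a_i⟩ ≤ (2/√|S|) · σ_max² ‖x_k - x‖² / (√m √(1-q-β)). -/
open RealInnerProductSpace Finset

lemma sigmaMax_nonneg {m n : ℕ} (a : Fin m → EuclideanSpace ℝ (Fin n)) :
    0 ≤ sigmaMax a := by
  apply Real.sSup_nonneg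
  rintro t ⟨y, -, rfl⟩
  exact Real.sqrt_nonneg _

lemma sqrt_sum_le_sigmaMax {m n : ℕ} (a : Fin m → EuclideanSpace ℝ (Fin n))
    (ha : ∀ i, ‖a i‖ = 1) (y : EuclideanSpace ℝ (Fin n)) :
    Real.sqrt (∑ i, ⟪a i, y⟫ ^ 2) ≤ sigmaMax a * ‖y‖ := by
  rcases eq_or_ne y 0 with rfl | hy
  · simp [sigmaMax_nonneg]
  have hny : (0:ℝ) < ‖y‖ := norm_pos_iff.mpr hy
  have hbdd : BddAbove {t : ℝ | ∃ y : EuclideanSpace ℝ (Fin n), ‖y‖ = 1 ∧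
      t = Real.sqrt (∑ i, ⟪a i, y⟫ ^ 2)} := by
    refine ⟨Real.sqrt m, ?_⟩
    rintro t ⟨z, hz, rfl⟩
    apply Real.sqrt_le_sqrt
    calc ∑ i, ⟪a i, z⟫ ^ 2 ≤ ∑ _i : Fin m, (1:ℝ) := by
          apply Finset.sum_le_sum
          intro i _
          have := abs_real_inner_le_norm (a i) z
          rw [ha i, hz] at this
          calc ⟪a i, z⟫ ^ 2 = |⟪a i, z⟫| ^ 2 := (sq_abs _).symm
            _ ≤ 1 ^ 2 := by nlinarith [abs_nonneg ⟪a i, z⟫]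
            _ = 1 := one_pow 2
      _ = m := by simp
  set u : EuclideanSpace ℝ (Fin n) := ‖y‖⁻¹ • y with hu
  have hnu : ‖u‖ = 1 := by
    rw [hu, norm_smul, norm_inv, norm_norm, inv_mul_cancel₀ hny.ne']
  have hmem : Real.sqrt (∑ i, ⟪a i, u⟫ ^ 2) ≤ sigmaMax a :=
    le_csSup hbdd ⟨u, hnu, rfl⟩
  have hval : Real.sqrt (∑ i, ⟪a i, u⟫ ^ 2)
      = ‖y‖⁻¹ * Real.sqrt (∑ i, ⟪a i, y⟫ ^ 2) := by
    have : ∀ i, ⟪a i, u⟫ ^ 2 = ‖y‖⁻¹ ^ 2 * ⟪a i, y⟫ ^ 2 := by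
      intro i
      rw [hu, real_inner_smul_right]
      ring
    simp_rw [this, ← Finset.mul_sum]
    rw [Real.sqrt_mul (by positivity), Real.sqrt_sq (by positivity)]
  rw [hval] at hmem
  calc Real.sqrt (∑ i, ⟪a i, y⟫ ^ 2)
      = ‖y‖ * (‖y‖⁻¹ * Real.sqrt (∑ i, ⟪a i, y⟫ ^ 2)) := by
        field_simp
    _ ≤ ‖y‖ * sigmaMax a := by
        exact mul_le_mul_of_nonneg_left hmem hny.le
    _ = sigmaMax a * ‖y‖ := mul_comm _ _

/-- cross-term estimate in the proof of Lemma 2. -/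
theorem cross_term_estimate {m n : ℕ} (a : Fin m → EuclideanSpace ℝ (Fin n))
    (x xk : EuclideanSpace ℝ (Fin n)) (b : Fin m → ℝ) (q β Q : ℝ)
    (S : Finset (Fin m))
    (ha : ∀ i, ‖a i‖ = 1)
    (hq : 0 < q + β) (hqβ : q + β < 1)
    (hS : S.Nonempty)
    (hres : ∀ i ∈ S, |⟪a i, xk⟫ - b i| ≤ Q)
    (hQ : Q ≤ sigmaMax a * ‖xk - x‖ / (Real.sqrt m * Real.sqrt (1 - q - β))) :
    (1 / S.card : ℝ) * ∑ i ∈ S, 2 * (b i - ⟪a i, xk⟫) * ⟪xk - x, a i⟫ ≤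
      (2 / Real.sqrt S.card) * sigmaMax a ^ 2 * ‖xk - x‖ ^ 2 /
        (Real.sqrt m * Real.sqrt (1 - q - β)) := by
  set σ := sigmaMax a with hσdef
  set c := ‖xk - x‖ with hcdef
  obtain ⟨i0, hi0⟩ := hS
  have hm : 0 < m := i0.pos
  have hcard : (0:ℝ) < S.card := by
    exact_mod_cast Finset.card_pos.mpr ⟨i0, hi0⟩
  have hD : (0:ℝ) < Real.sqrt m * Real.sqrt (1 - q - β) := by
    apply mul_pos <;> apply Real.sqrt_pos.mpr
    · exact_mod_cast hm
    · linarith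
  have hQ0 : 0 ≤ Q := le_trans (abs_nonneg _) (hres i0 hi0)
  have hσ0 : 0 ≤ σ := sigmaMax_nonneg a
  have hc0 : 0 ≤ c := norm_nonneg _
  -- key: ∑_{i∈S} ⟪xk-x, a i⟫^2 ≤ σ^2 c^2
  have hsum : ∑ i ∈ S, ⟪xk - x, a i⟫ ^ 2 ≤ σ ^ 2 * c ^ 2 := by
    have h1 : ∑ i ∈ S, ⟪xk - x, a i⟫ ^ 2 ≤ ∑ i, ⟪a i, xk - x⟫ ^ 2 := by
      have : ∀ i, ⟪xk - x, a i⟫ ^ 2 = ⟪a i, xk - x⟫ ^ 2 := fun i => by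
        rw [real_inner_comm]
      simp_rw [this]
      exact Finset.sum_le_sum_of_subset_of_nonneg (Finset.subset_univ S)
        (fun i _ _ => sq_nonneg _)
    have h2 := sqrt_sum_le_sigmaMax a ha (xk - x)
    have h3 : ∑ i, ⟪a i, xk - x⟫ ^ 2 ≤ (σ * c) ^ 2 := by
      have hnn : 0 ≤ ∑ i, ⟪a i, xk - x⟫ ^ 2 :=
        Finset.sum_nonneg fun i _ => sq_nonneg _
      nlinarith [Real.sq_sqrt hnn, Real.sqrt_nonneg (∑ i, ⟪a i, xk - x⟫ ^ 2)]
    calc ∑ i ∈ S, ⟪xk - x, a i⟫ ^ 2 ≤ ∑ i, ⟪a i, xk - x⟫ ^ 2 := h1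
      _ ≤ (σ * c) ^ 2 := h3
      _ = σ ^ 2 * c ^ 2 := by ring
  -- Cauchy–Schwarz: ∑_{i∈S} |⟪xk-x, a i⟫| ≤ √|S| · σ c
  have hCS : ∑ i ∈ S, |⟪xk - x, a i⟫| ≤ Real.sqrt S.card * (σ * c) := by
    have hcs := Finset.sum_mul_sq_le_sq_mul_sq S (fun _ => (1:ℝ))
      (fun i => |⟪xk - x, a i⟫|)
    simp only [one_pow, one_mul, sq_abs, Finset.sum_const, nsmul_eq_mul, mul_one] at hcs
    have hle : (∑ i ∈ S, |⟪xk - x, a i⟫|) ^ 2 ≤ (S.card : ℝ) * (σ ^ 2 * c ^ 2) :=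
      hcs.trans (mul_le_mul_of_nonneg_left hsum hcard.le)
    have hT0 : 0 ≤ ∑ i ∈ S, |⟪xk - x, a i⟫| :=
      Finset.sum_nonneg fun i _ => abs_nonneg _
    have hB0 : 0 ≤ Real.sqrt S.card * (σ * c) := by positivity
    have hsq : Real.sqrt S.card * Real.sqrt S.card = (S.card : ℝ) :=
      Real.mul_self_sqrt hcard.le
    have h2 : ((S.card:ℝ) * (σ ^ 2 * c ^ 2)) = (Real.sqrt S.card * (σ * c)) ^ 2 := by
      rw [mul_pow, Real.sq_sqrt hcard.le]; ring
    have h3 := Real.sqrt_le_sqrt hle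
    rwa [Real.sqrt_sq hT0, h2, Real.sqrt_sq hB0] at h3
  -- bound each term by 2Q|⟪xk-x,a i⟫|
  have hterm : ∑ i ∈ S, 2 * (b i - ⟪a i, xk⟫) * ⟪xk - x, a i⟫ ≤
      2 * Q * ∑ i ∈ S, |⟪xk - x, a i⟫| := by
    rw [Finset.mul_sum]
    apply Finset.sum_le_sum
    intro i hi
    have h1 : |b i - ⟪a i, xk⟫| ≤ Q := by rw [abs_sub_comm]; exact hres i hi
    calc 2 * (b i - ⟪a i, xk⟫) * ⟪xk - x, a i⟫
        ≤ |2 * (b i - ⟪a i, xk⟫) * ⟪xk - x, a i⟫| := le_abs_self _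
      _ = 2 * |b i - ⟪a i, xk⟫| * |⟪xk - x, a i⟫| := by
          rw [abs_mul, abs_mul]; simp
      _ ≤ 2 * Q * |⟪xk - x, a i⟫| := by
          apply mul_le_mul_of_nonneg_right _ (abs_nonneg _)
          linarith
  -- put together
  have hchain : ∑ i ∈ S, 2 * (b i - ⟪a i, xk⟫) * ⟪xk - x, a i⟫ ≤
      2 * Q * (Real.sqrt S.card * (σ * c)) :=
    hterm.trans (by
      apply mul_le_mul_of_nonneg_left hCS
      positivity)
  have hQ' : 2 * Q * (Real.sqrt S.card * (σ * c)) ≤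
      2 * (σ * c / (Real.sqrt m * Real.sqrt (1 - q - β))) *
        (Real.sqrt S.card * (σ * c)) := by
    apply mul_le_mul_of_nonneg_right _ (by positivity)
    have : Q ≤ σ * c / (Real.sqrt m * Real.sqrt (1 - q - β)) := hQ
    linarith
  have hsq : Real.sqrt S.card * Real.sqrt S.card = (S.card : ℝ) :=
    Real.mul_self_sqrt hcard.le
  have hsqpos : (0:ℝ) < Real.sqrt S.card := Real.sqrt_pos.mpr hcard
  calc (1 / S.card : ℝ) * ∑ i ∈ S, 2 * (b i - ⟪a i, xk⟫) * ⟪xk - x, a i⟫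
      ≤ (1 / S.card : ℝ) * (2 * (σ * c / (Real.sqrt m * Real.sqrt (1 - q - β))) *
          (Real.sqrt S.card * (σ * c))) := by
        apply mul_le_mul_of_nonneg_left (hchain.trans hQ') (by positivity)
    _ = (2 / Real.sqrt S.card) * σ ^ 2 * c ^ 2 /
        (Real.sqrt m * Real.sqrt (1 - q - β)) := by
        rw [← hsq]
        have hne : Real.sqrt (S.card:ℝ) ≠ 0 := hsqpos.ne'
        have hDne : Real.sqrt m * Real.sqrt (1 - q - β) ≠ 0 := hD.ne'
        field_simp
        rw [Real.sqrt_sq hsqpos.le]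
        ring
end

section
/- Lemma 2 (expected increase from corrupted equations): Under the setup of the quantile Kaczmarz method with unit-norm rows, if S is the set of corrupted equations lying in the q-quantile, S ≠ ∅, |S| ≤ βm, then the average over i ∈ S of ‖x_{k+1} - x‖² (with x_{k+1} = x_k + (b_i - ⟨x_k, a_i⟩)a_i) is at most (1 + (σ_max²/(√|S|√m))·(2/√(1-q-β) + √β/(1-q-β))) · ‖x_k - x‖². -/
open RealInnerProductSpace Finset

lemma sum_inner_sq_le {m n : ℕ} (a : Fin m → EuclideanSpace ℝ (Fin n))
    (ha : ∀ i, ‖a i‖ = 1) (y : EuclideanSpace ℝ (Fin n)) :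
    ∑ i, ⟪a i, y⟫ ^ 2 ≤ sigmaMax a ^ 2 * ‖y‖ ^ 2 := by
  by_cases hy : y = 0
  · simp [hy]
  · set u : EuclideanSpace ℝ (Fin n) := (‖y‖⁻¹ : ℝ) • y with hu_def
    have hu : ‖u‖ = 1 := by
      rw [hu_def, norm_smul, norm_inv, norm_norm, inv_mul_cancel₀ (norm_ne_zero_iff.2 hy)]
    have hbdd : BddAbove {t : ℝ | ∃ z : EuclideanSpace ℝ (Fin n), ‖z‖ = 1 ∧
        t = Real.sqrt (∑ i, ⟪a i, z⟫ ^ 2)} := by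
      refine ⟨Real.sqrt m, ?_⟩
      rintro t ⟨z, hz, rfl⟩
      apply Real.sqrt_le_sqrt
      calc ∑ i, ⟪a i, z⟫ ^ 2 ≤ ∑ _i : Fin m, (1 : ℝ) := by
            refine Finset.sum_le_sum fun i _ => ?_
            have h1 : |⟪a i, z⟫| ≤ ‖a i‖ * ‖z‖ := abs_real_inner_le_norm _ _
            rw [ha i, hz, mul_one] at h1
            calc ⟪a i, z⟫ ^ 2 = |⟪a i, z⟫| ^ 2 := (sq_abs _).symm
              _ ≤ 1 ^ 2 := pow_le_pow_left₀ (abs_nonneg _) h1 2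
              _ = 1 := one_pow 2
        _ = (m : ℝ) := by simp
    have hkey : Real.sqrt (∑ i, ⟪a i, u⟫ ^ 2) ≤ sigmaMax a :=
      le_csSup hbdd ⟨u, hu, rfl⟩
    have hsq : ∑ i, ⟪a i, u⟫ ^ 2 ≤ sigmaMax a ^ 2 := by
      have h0 : 0 ≤ ∑ i, ⟪a i, u⟫ ^ 2 := Finset.sum_nonneg fun i _ => sq_nonneg _
      calc ∑ i, ⟪a i, u⟫ ^ 2 = Real.sqrt (∑ i, ⟪a i, u⟫ ^ 2) ^ 2 := (Real.sq_sqrt h0).symm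
        _ ≤ sigmaMax a ^ 2 := pow_le_pow_left₀ (Real.sqrt_nonneg _) hkey 2
    have hyu : y = (‖y‖ : ℝ) • u := by
      rw [hu_def, smul_smul, mul_inv_cancel₀ (norm_ne_zero_iff.2 hy), one_smul]
    calc ∑ i, ⟪a i, y⟫ ^ 2 = ∑ i, (‖y‖ * ⟪a i, u⟫) ^ 2 := by
          refine Finset.sum_congr rfl fun i _ => ?_
          conv_lhs => rw [hyu]
          rw [real_inner_smul_right]
      _ = ‖y‖ ^ 2 * ∑ i, ⟪a i, u⟫ ^ 2 := by rw [Finset.mul_sum]; ring_nf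
      _ ≤ ‖y‖ ^ 2 * sigmaMax a ^ 2 := by
          exact mul_le_mul_of_nonneg_left hsq (sq_nonneg _)
      _ = sigmaMax a ^ 2 * ‖y‖ ^ 2 := by ring

set_option maxHeartbeats 1000000 in
/-- Lemma 2: expected increase from corrupted equations in the
`q`-quantile. `C` indexes the corrupted equations, `Q` is the `q`-quantile of the
residuals, and `S` is the set of corrupted equations lying in the quantile. -/
theorem corrupted_average_bound {m n : ℕ} (a : Fin m → EuclideanSpace ℝ (Fin n))
    (x xk : EuclideanSpace ℝ (Fin n)) (bt b : Fin m → ℝ) (q β Q : ℝ)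
    (C : Finset (Fin m))
    (ha : ∀ i, ‖a i‖ = 1)
    (hbt : ∀ i, ⟪a i, x⟫ = bt i)
    (hb : ∀ i ∉ C, b i = bt i)
    (hβ : 0 ≤ β)
    (hC : (C.card : ℝ) ≤ β * m)
    (hq : 0 < q) (hq1 : q < 1 - β)
    (hquant : (1 - q) * m ≤ ((univ.filter fun i => Q ≤ |⟪a i, xk⟫ - b i|).card : ℝ))
    (S : Finset (Fin m))
    (hSdef : S = C.filter fun i => |⟪a i, xk⟫ - b i| ≤ Q)
    (hSne : S.Nonempty) :
    (1 / S.card : ℝ) * ∑ i ∈ S, ‖xk + (b i - ⟪a i, xk⟫) • a i - x‖ ^ 2 ≤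
      (1 + sigmaMax a ^ 2 / (Real.sqrt S.card * Real.sqrt m) *
        (2 / Real.sqrt (1 - q - β) + Real.sqrt β / (1 - q - β))) * ‖xk - x‖ ^ 2 := by
  -- notation
  set σ : ℝ := sigmaMax a with hσdef
  set E : ℝ := ‖xk - x‖ with hEdef
  set r : Fin m → ℝ := fun i => ⟪a i, xk⟫ - b i with hrdef
  set s : Fin m → ℝ := fun i => ⟪a i, xk - x⟫ with hsdef
  have hE0 : 0 ≤ E := norm_nonneg _
  have hσ0 : 0 ≤ σ := sigmaMax_nonneg a
  have hσE : 0 ≤ σ * E := mul_nonneg hσ0 hE0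
  have hc : (0 : ℝ) < S.card := by
    exact_mod_cast Finset.card_pos.2 hSne
  set c : ℝ := (S.card : ℝ) with hcdef
  set k : ℝ := Real.sqrt c with hkdef
  have hk : 0 < k := Real.sqrt_pos.2 hc
  have hk2 : k ^ 2 = c := Real.sq_sqrt hc.le
  have hm : 0 < (m : ℝ) := by
    obtain ⟨i0, _⟩ := hSne
    exact_mod_cast i0.pos
  set sm : ℝ := Real.sqrt m with hsmdef
  have hsm : 0 < sm := Real.sqrt_pos.2 hm
  have hsm2 : sm ^ 2 = (m : ℝ) := Real.sq_sqrt hm.le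
  have hqb : 0 < 1 - q - β := by linarith
  set sq1 : ℝ := Real.sqrt (1 - q - β) with hsq1def
  have hsq1 : 0 < sq1 := Real.sqrt_pos.2 hqb
  have hsq12 : sq1 ^ 2 = 1 - q - β := Real.sq_sqrt hqb.le
  set sb : ℝ := Real.sqrt β with hsbdef
  have hsb : 0 ≤ sb := Real.sqrt_nonneg _
  have hsb2 : sb ^ 2 = β := Real.sq_sqrt hβ
  -- membership facts for S
  have hSQ : ∀ i ∈ S, |r i| ≤ Q := by
    intro i hi
    rw [hSdef] at hi
    exact (Finset.mem_filter.1 hi).2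
  have hSC : S ⊆ C := by rw [hSdef]; exact Finset.filter_subset _ _
  have hQ0 : 0 ≤ Q := by
    obtain ⟨i0, hi0⟩ := hSne
    exact le_trans (abs_nonneg _) (hSQ i0 hi0)
  -- bound on sums of s i ^ 2
  have hSumAll : ∑ i, s i ^ 2 ≤ σ ^ 2 * E ^ 2 := sum_inner_sq_le a ha (xk - x)
  have hSumS : ∑ i ∈ S, s i ^ 2 ≤ σ ^ 2 * E ^ 2 :=
    le_trans (Finset.sum_le_sum_of_subset_of_nonneg (Finset.subset_univ S)
      (fun i _ _ => sq_nonneg _)) hSumAll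
  -- quantile bound: Q * (sq1 * sm) ≤ σ * E
  have hQm : Q ^ 2 * ((1 - q - β) * m) ≤ σ ^ 2 * E ^ 2 := by
    set T : Finset (Fin m) := univ.filter fun i => Q ≤ |⟪a i, xk⟫ - b i| with hTdef
    have hTcard : (1 - q) * m ≤ (T.card : ℝ) := hquant
    have hTC : ((T \ C).card : ℝ) ≥ (1 - q - β) * m := by
      have h1 : T.card ≤ (T \ C).card + C.card := Finset.card_le_card_sdiff_add_card
      have h1' : (T.card : ℝ) ≤ ((T \ C).card : ℝ) + (C.card : ℝ) := by exact_mod_cast h1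
      nlinarith
    have hterm : ∀ i ∈ T \ C, Q ^ 2 ≤ s i ^ 2 := by
      intro i hi
      have hiT : i ∈ T := (Finset.mem_sdiff.1 hi).1
      have hiC : i ∉ C := (Finset.mem_sdiff.1 hi).2
      have h1 : Q ≤ |r i| := by
        rw [hTdef] at hiT
        exact (Finset.mem_filter.1 hiT).2
      have h2 : r i = s i := by
        rw [hrdef, hsdef]
        simp only
        rw [hb i hiC, inner_sub_right, hbt]
      calc Q ^ 2 ≤ |r i| ^ 2 := pow_le_pow_left₀ hQ0 h1 2
        _ = r i ^ 2 := sq_abs _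
        _ = s i ^ 2 := by rw [h2]
    have h3 : ((T \ C).card : ℝ) * Q ^ 2 ≤ ∑ i ∈ T \ C, s i ^ 2 := by
      have := Finset.card_nsmul_le_sum (T \ C) (fun i => s i ^ 2) (Q ^ 2) hterm
      rwa [nsmul_eq_mul] at this
    have h4 : ∑ i ∈ T \ C, s i ^ 2 ≤ σ ^ 2 * E ^ 2 :=
      le_trans (Finset.sum_le_sum_of_subset_of_nonneg (Finset.subset_univ _)
        (fun i _ _ => sq_nonneg _)) hSumAll
    have h5 : Q ^ 2 * ((1 - q - β) * m) ≤ ((T \ C).card : ℝ) * Q ^ 2 := by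
      rw [mul_comm (((T \ C).card : ℝ))]
      exact mul_le_mul_of_nonneg_left hTC (sq_nonneg Q)
    linarith
  have hQs : Q * (sq1 * sm) ≤ σ * E := by
    have h1 : (Q * (sq1 * sm)) ^ 2 ≤ (σ * E) ^ 2 := by
      calc (Q * (sq1 * sm)) ^ 2 = Q ^ 2 * (sq1 ^ 2 * sm ^ 2) := by ring
        _ = Q ^ 2 * ((1 - q - β) * m) := by rw [hsq12, hsm2]
        _ ≤ σ ^ 2 * E ^ 2 := hQm
        _ = (σ * E) ^ 2 := by ring
    have h2 : 0 ≤ Q * (sq1 * sm) := by positivity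
    exact (pow_le_pow_iff_left₀ h2 hσE two_ne_zero).1 h1
  -- per-term identity
  have hterm : ∀ i, ‖xk + (b i - ⟪a i, xk⟫) • a i - x‖ ^ 2
      = E ^ 2 + (r i ^ 2 - 2 * r i * s i) := by
    intro i
    rw [add_sub_right_comm, norm_add_sq_real, real_inner_smul_right, norm_smul, ha i,
      mul_one, Real.norm_eq_abs, sq_abs, real_inner_comm (a i) (xk - x)]
    simp only [hrdef, hsdef, hEdef]
    ring
  have hsum : ∑ i ∈ S, ‖xk + (b i - ⟪a i, xk⟫) • a i - x‖ ^ 2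
      = c * E ^ 2 + ∑ i ∈ S, (r i ^ 2 - 2 * r i * s i) := by
    rw [Finset.sum_congr rfl fun i _ => hterm i, Finset.sum_add_distrib,
      Finset.sum_const, nsmul_eq_mul, hcdef]
  -- Cauchy-Schwarz bound on sum of |s i|
  have hCS : ∑ i ∈ S, |s i| ≤ k * (σ * E) := by
    have h1 : (∑ i ∈ S, |s i|) ^ 2 ≤ c * ∑ i ∈ S, |s i| ^ 2 := by
      have := sq_sum_le_card_mul_sum_sq (s := S) (f := fun i => |s i|)
      exact_mod_cast this
    have h2 : ∑ i ∈ S, |s i| ^ 2 = ∑ i ∈ S, s i ^ 2 :=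
      Finset.sum_congr rfl fun i _ => sq_abs _
    have h3 : (∑ i ∈ S, |s i|) ^ 2 ≤ (k * (σ * E)) ^ 2 := by
      rw [h2] at h1
      calc (∑ i ∈ S, |s i|) ^ 2 ≤ c * ∑ i ∈ S, s i ^ 2 := h1
        _ ≤ c * (σ ^ 2 * E ^ 2) := mul_le_mul_of_nonneg_left hSumS hc.le
        _ = (k * (σ * E)) ^ 2 := by rw [mul_pow, hk2]; ring
    have h4 : 0 ≤ ∑ i ∈ S, |s i| := Finset.sum_nonneg fun i _ => abs_nonneg _
    nlinarith [mul_nonneg (mul_nonneg hk.le hσ0) hE0]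
  -- step A
  have hA : ∑ i ∈ S, (r i ^ 2 - 2 * r i * s i) ≤ c * Q ^ 2 + 2 * Q * (k * (σ * E)) := by
    have h1 : ∑ i ∈ S, (r i ^ 2 - 2 * r i * s i) ≤ ∑ i ∈ S, (Q ^ 2 + 2 * Q * |s i|) := by
      refine Finset.sum_le_sum fun i hi => ?_
      have hri : |r i| ≤ Q := hSQ i hi
      have hr2 : r i ^ 2 ≤ Q ^ 2 := by
        calc r i ^ 2 = |r i| ^ 2 := (sq_abs _).symm
          _ ≤ Q ^ 2 := pow_le_pow_left₀ (abs_nonneg _) hri 2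
      have hrs : -(2 * (r i * s i)) ≤ 2 * Q * |s i| := by
        have h2 : |r i * s i| ≤ Q * |s i| := by
          rw [abs_mul]
          exact mul_le_mul_of_nonneg_right hri (abs_nonneg _)
        have h3 : -(r i * s i) ≤ |r i * s i| := neg_le_abs _
        nlinarith
      nlinarith
    have h2 : ∑ i ∈ S, (Q ^ 2 + 2 * Q * |s i|) = c * Q ^ 2 + 2 * Q * ∑ i ∈ S, |s i| := by
      rw [Finset.sum_add_distrib, Finset.sum_const, nsmul_eq_mul, Finset.mul_sum, hcdef]
    have h3 : 2 * Q * ∑ i ∈ S, |s i| ≤ 2 * Q * (k * (σ * E)) :=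
      mul_le_mul_of_nonneg_left hCS (by positivity)
    linarith
  -- key cleared-denominator inequality
  have hfin : Q ^ 2 * (k * sm * sq1 ^ 2) + 2 * Q * (σ * E) * (sm * sq1 ^ 2)
      ≤ σ ^ 2 * E ^ 2 * (2 * sq1 + sb) := by
    have hkb : k ≤ sb * sm := by
      have h1 : c ≤ β * m := by
        rw [hcdef]
        exact le_trans (by exact_mod_cast Finset.card_le_card hSC) hC
      calc k = Real.sqrt c := hkdef
        _ ≤ Real.sqrt (β * m) := Real.sqrt_le_sqrt h1
        _ = sb * sm := by rw [hsbdef, hsmdef, Real.sqrt_mul hβ]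
    have e1 : (Q * (sq1 * sm)) ^ 2 ≤ (σ * E) ^ 2 :=
      pow_le_pow_left₀ (by positivity) hQs 2
    have hp1 : Q ^ 2 * (k * sm * sq1 ^ 2) ≤ σ ^ 2 * E ^ 2 * sb := by
      calc Q ^ 2 * (k * sm * sq1 ^ 2) = (Q ^ 2 * sq1 ^ 2 * sm) * k := by ring
        _ ≤ (Q ^ 2 * sq1 ^ 2 * sm) * (sb * sm) :=
            mul_le_mul_of_nonneg_left hkb (by positivity)
        _ = sb * (Q * (sq1 * sm)) ^ 2 := by ring
        _ ≤ sb * (σ * E) ^ 2 := mul_le_mul_of_nonneg_left e1 hsb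
        _ = σ ^ 2 * E ^ 2 * sb := by ring
    have hp2 : 2 * Q * (σ * E) * (sm * sq1 ^ 2) ≤ σ ^ 2 * E ^ 2 * (2 * sq1) := by
      calc 2 * Q * (σ * E) * (sm * sq1 ^ 2)
          = (2 * sq1 * (σ * E)) * (Q * (sq1 * sm)) := by ring
        _ ≤ (2 * sq1 * (σ * E)) * (σ * E) :=
            mul_le_mul_of_nonneg_left hQs (by positivity)
        _ = σ ^ 2 * E ^ 2 * (2 * sq1) := by ring
    linarith
  -- the main fractional step
  have hmain2 : Q ^ 2 + 2 * Q * (σ * E) / k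
      ≤ σ ^ 2 * E ^ 2 * (2 * sq1 + sb) / (k * sm * sq1 ^ 2) := by
    have heq : Q ^ 2 + 2 * Q * (σ * E) / k = (Q ^ 2 * k + 2 * Q * (σ * E)) / k := by
      field_simp
    rw [heq, div_le_div_iff₀ hk (by positivity)]
    calc (Q ^ 2 * k + 2 * Q * (σ * E)) * (k * sm * sq1 ^ 2)
        = (Q ^ 2 * (k * sm * sq1 ^ 2) + 2 * Q * (σ * E) * (sm * sq1 ^ 2)) * k := by ring
      _ ≤ σ ^ 2 * E ^ 2 * (2 * sq1 + sb) * k := mul_le_mul_of_nonneg_right hfin hk.le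
  -- assemble
  have hRHS : σ ^ 2 / (k * sm) * (2 / sq1 + sb / (1 - q - β)) * E ^ 2
      = σ ^ 2 * E ^ 2 * (2 * sq1 + sb) / (k * sm * sq1 ^ 2) := by
    rw [← hsq12]
    field_simp
  calc (1 / c) * ∑ i ∈ S, ‖xk + (b i - ⟪a i, xk⟫) • a i - x‖ ^ 2
      = E ^ 2 + (∑ i ∈ S, (r i ^ 2 - 2 * r i * s i)) / c := by
        rw [hsum]; field_simp
    _ ≤ E ^ 2 + (c * Q ^ 2 + 2 * Q * (k * (σ * E))) / c := by
        gcongr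
    _ = E ^ 2 + (Q ^ 2 + 2 * Q * (σ * E) / k) := by
        rw [← hk2]
        field_simp
    _ ≤ E ^ 2 + σ ^ 2 * E ^ 2 * (2 * sq1 + sb) / (k * sm * sq1 ^ 2) :=
        add_le_add_right hmain2 _
    _ = (1 + σ ^ 2 / (k * sm) * (2 / sq1 + sb / (1 - q - β))) * E ^ 2 := by
        rw [← hRHS]; ring
end

section
/- Main Theorem (one-step contraction): Under the setup (unit-norm rows, Ax = b_t, ‖b - b_t‖_{ℓ⁰} ≤ βm, 0 < β < q < 1 - β), if (q/(q-β))·(2√β/√(1-q-β) + β/(1-q-β)) < σ_{q-β,min}(A)²/σ_max(A)², then for the q-quantile random Kaczmarz iteration the expected squared error satisfies E‖x_{k+1} - x‖² ≤ (1 - c)·‖x_k - x‖² where c = (q-β)·σ_{q-β,min}(A)²/(q²m) - (σ_max(A)²/(qm))·(2√β/√(1-q-β) + β/(1-q-β)) > 0. -/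
open RealInnerProductSpace Finset

/-- `σ_{r,min}`: the minimum over all row-subsets of cardinality `k` of the smallest
singular value of the corresponding row-submatrix. -/
noncomputable def sigmaRMin {m n : ℕ} (a : Fin m → EuclideanSpace ℝ (Fin n))
    (k : ℕ) : ℝ :=
  sInf {t : ℝ | ∃ S : Finset (Fin m), S.card = k ∧
    ∃ y : EuclideanSpace ℝ (Fin n), ‖y‖ = 1 ∧
      t = Real.sqrt (∑ i ∈ S, ⟪a i, y⟫ ^ 2)}

lemma sigmaRMin_nonneg {m n : ℕ} (a : Fin m → EuclideanSpace ℝ (Fin n)) (k : ℕ) :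
    0 ≤ sigmaRMin a k := by
  apply Real.sInf_nonneg
  rintro t ⟨S, _, y, _, rfl⟩
  exact Real.sqrt_nonneg _

lemma sigmaMax_bound {m n : ℕ} (a : Fin m → EuclideanSpace ℝ (Fin n))
    (ha : ∀ i, ‖a i‖ = 1) (y : EuclideanSpace ℝ (Fin n)) (T : Finset (Fin m)) :
    ∑ i ∈ T, ⟪a i, y⟫ ^ 2 ≤ sigmaMax a ^ 2 * ‖y‖ ^ 2 := by
  by_cases hy : y = 0
  · simp [hy]
  · have hyn : (0:ℝ) < ‖y‖ := norm_pos_iff.2 hy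
    set u := ‖y‖⁻¹ • y with hu_def
    have hu : ‖u‖ = 1 := norm_smul_inv_norm hy
    have hmem : Real.sqrt (∑ i, ⟪a i, u⟫ ^ 2) ∈
        {t : ℝ | ∃ z : EuclideanSpace ℝ (Fin n), ‖z‖ = 1 ∧
          t = Real.sqrt (∑ i, ⟪a i, z⟫ ^ 2)} := ⟨u, hu, rfl⟩
    have hbdd : BddAbove {t : ℝ | ∃ z : EuclideanSpace ℝ (Fin n), ‖z‖ = 1 ∧
        t = Real.sqrt (∑ i, ⟪a i, z⟫ ^ 2)} := by
      refine ⟨Real.sqrt m, ?_⟩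
      rintro t ⟨z, hz, rfl⟩
      apply Real.sqrt_le_sqrt
      calc ∑ i, ⟪a i, z⟫ ^ 2 ≤ ∑ _i : Fin m, (1:ℝ) := by
            apply Finset.sum_le_sum
            intro i _
            have h1 : |⟪a i, z⟫| ≤ ‖a i‖ * ‖z‖ := abs_real_inner_le_norm _ _
            rw [ha i, hz] at h1
            nlinarith [abs_nonneg ⟪a i, z⟫, sq_abs ⟪a i, z⟫]
        _ = m := by simp
    have hle : Real.sqrt (∑ i, ⟪a i, u⟫ ^ 2) ≤ sigmaMax a := le_csSup hbdd hmem
    have hsq : ∑ i, ⟪a i, u⟫ ^ 2 ≤ sigmaMax a ^ 2 := by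
      have := pow_le_pow_left₀ (Real.sqrt_nonneg _) hle 2
      rwa [Real.sq_sqrt (by positivity)] at this
    have hT : ∑ i ∈ T, ⟪a i, u⟫ ^ 2 ≤ sigmaMax a ^ 2 :=
      le_trans (Finset.sum_le_sum_of_subset_of_nonneg (Finset.subset_univ T)
        (fun i _ _ => sq_nonneg _)) hsq
    have hrw : ∀ i, ⟪a i, u⟫ = ‖y‖⁻¹ * ⟪a i, y⟫ := fun i => real_inner_smul_right _ _ _
    calc ∑ i ∈ T, ⟪a i, y⟫ ^ 2 = (∑ i ∈ T, ⟪a i, u⟫ ^ 2) * ‖y‖ ^ 2 := by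
          rw [Finset.sum_mul]
          apply Finset.sum_congr rfl
          intro i _
          rw [hrw i]
          field_simp
      _ ≤ sigmaMax a ^ 2 * ‖y‖ ^ 2 := mul_le_mul_of_nonneg_right hT (sq_nonneg _)

lemma sigmaRMin_bound {m n : ℕ} (a : Fin m → EuclideanSpace ℝ (Fin n))
    (y : EuclideanSpace ℝ (Fin n)) (S : Finset (Fin m)) (k : ℕ) (hS : S.card = k) :
    sigmaRMin a k ^ 2 * ‖y‖ ^ 2 ≤ ∑ i ∈ S, ⟪a i, y⟫ ^ 2 := by
  by_cases hy : y = 0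
  · simp [hy, Finset.sum_nonneg (fun i _ => sq_nonneg (⟪a i, y⟫))]
  · have hyn : (0:ℝ) < ‖y‖ := norm_pos_iff.2 hy
    set u := ‖y‖⁻¹ • y with hu_def
    have hu : ‖u‖ = 1 := norm_smul_inv_norm hy
    have hmem : Real.sqrt (∑ i ∈ S, ⟪a i, u⟫ ^ 2) ∈
        {t : ℝ | ∃ S' : Finset (Fin m), S'.card = k ∧
          ∃ z : EuclideanSpace ℝ (Fin n), ‖z‖ = 1 ∧
            t = Real.sqrt (∑ i ∈ S', ⟪a i, z⟫ ^ 2)} := ⟨S, hS, u, hu, rfl⟩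
    have hbdd : BddBelow {t : ℝ | ∃ S' : Finset (Fin m), S'.card = k ∧
        ∃ z : EuclideanSpace ℝ (Fin n), ‖z‖ = 1 ∧
          t = Real.sqrt (∑ i ∈ S', ⟪a i, z⟫ ^ 2)} := by
      refine ⟨0, ?_⟩
      rintro t ⟨S', _, z, _, rfl⟩
      exact Real.sqrt_nonneg _
    have hle : sigmaRMin a k ≤ Real.sqrt (∑ i ∈ S, ⟪a i, u⟫ ^ 2) := csInf_le hbdd hmem
    have hsq : sigmaRMin a k ^ 2 ≤ ∑ i ∈ S, ⟪a i, u⟫ ^ 2 := by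
      have := pow_le_pow_left₀ (sigmaRMin_nonneg a k) hle 2
      rwa [Real.sq_sqrt (by positivity)] at this
    have hrw : ∀ i, ⟪a i, u⟫ = ‖y‖⁻¹ * ⟪a i, y⟫ := fun i => real_inner_smul_right _ _ _
    calc sigmaRMin a k ^ 2 * ‖y‖ ^ 2 ≤ (∑ i ∈ S, ⟪a i, u⟫ ^ 2) * ‖y‖ ^ 2 :=
          mul_le_mul_of_nonneg_right hsq (sq_nonneg _)
      _ = ∑ i ∈ S, ⟪a i, y⟫ ^ 2 := by
          rw [Finset.sum_mul]
          apply Finset.sum_congr rfl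
          intro i _
          rw [hrw i]
          field_simp

lemma sum_split_sdiff_inter {α : Type*} [DecidableEq α] (B C : Finset α) (f : α → ℝ) :
    ∑ i ∈ B, f i = ∑ i ∈ B \ C, f i + ∑ i ∈ B ∩ C, f i := by
  rw [← Finset.sum_union (Finset.disjoint_left.2 (by simp +contextual [Finset.mem_sdiff]))]
  congr 1
  ext i; simp [Finset.mem_sdiff]; tauto

set_option maxHeartbeats 2000000 in
/-- Main Theorem, one-step contraction: under the corruption
condition, one step of the `q`-quantile random Kaczmarz method (uniform choice of
an equation in the quantile set `B`) contracts the expected squared error. -/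
theorem main_theorem_one_step {m n : ℕ} (a : Fin m → EuclideanSpace ℝ (Fin n))
    (x xk : EuclideanSpace ℝ (Fin n)) (bt b : Fin m → ℝ) (q β Q : ℝ)
    (C : Finset (Fin m))
    (hm : 0 < m)
    (ha : ∀ i, ‖a i‖ = 1)
    (hbt : ∀ i, ⟪a i, x⟫ = bt i)
    (hb : ∀ i ∉ C, b i = bt i)
    (hC : (C.card : ℝ) ≤ β * m)
    (hβ : 0 < β) (hβq : β < q) (hq : q < 1 - β)
    (B : Finset (Fin m))
    (hBdef : B = univ.filter fun i => |⟪a i, xk⟫ - b i| ≤ Q)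
    (hBcard : (B.card : ℝ) = q * m)
    (hcond : q / (q - β) * (2 * Real.sqrt β / Real.sqrt (1 - q - β) +
        β / (1 - q - β)) <
      sigmaRMin a ⌈(q - β) * m⌉₊ ^ 2 / sigmaMax a ^ 2) :
    0 < (q - β) * sigmaRMin a ⌈(q - β) * m⌉₊ ^ 2 / (q ^ 2 * m) -
        sigmaMax a ^ 2 / (q * m) *
          (2 * Real.sqrt β / Real.sqrt (1 - q - β) + β / (1 - q - β)) ∧
      (1 / B.card : ℝ) * ∑ i ∈ B, ‖xk + (b i - ⟪a i, xk⟫) • a i - x‖ ^ 2 ≤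
        (1 - ((q - β) * sigmaRMin a ⌈(q - β) * m⌉₊ ^ 2 / (q ^ 2 * m) -
          sigmaMax a ^ 2 / (q * m) *
            (2 * Real.sqrt β / Real.sqrt (1 - q - β) + β / (1 - q - β)))) *
          ‖xk - x‖ ^ 2 := by
  have hmR : (0:ℝ) < m := Nat.cast_pos.2 hm
  have hqpos : 0 < q := lt_trans hβ hβq
  have hqβ : 0 < q - β := sub_pos.2 hβq
  have h1qβ : 0 < 1 - q - β := by linarith
  have hqm : 0 < q * m := mul_pos hqpos hmR
  set σ2 := sigmaRMin a ⌈(q - β) * m⌉₊ ^ 2 with hσ2_def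
  set Sg2 := sigmaMax a ^ 2 with hSg2_def
  set Eε := 2 * Real.sqrt β / Real.sqrt (1 - q - β) + β / (1 - q - β) with hEε_def
  have hσ2nn : 0 ≤ σ2 := hσ2_def ▸ sq_nonneg _
  have hSg2nn : 0 ≤ Sg2 := hSg2_def ▸ sq_nonneg _
  clear_value σ2 Sg2 Eε
  have hEpos : 0 < Eε := by
    have h1 : 0 ≤ 2 * Real.sqrt β / Real.sqrt (1 - q - β) := by positivity
    have h2 : 0 < β / (1 - q - β) := div_pos hβ h1qβ
    rw [hEε_def]; linarith
  have hSg2pos : 0 < Sg2 := by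
    rcases lt_or_eq_of_le hSg2nn with h | h
    · exact h
    · exfalso
      rw [← h, div_zero] at hcond
      nlinarith [mul_pos (div_pos hqpos hqβ) hEpos]
  have hcross : q * Eε * Sg2 < σ2 * (q - β) := by
    rw [div_mul_eq_mul_div] at hcond
    exact (div_lt_div_iff₀ hqβ hSg2pos).1 hcond
  have goal1 : 0 < (q - β) * σ2 / (q ^ 2 * m) - Sg2 / (q * m) * Eε := by
    rw [sub_pos, div_mul_eq_mul_div, div_lt_div_iff₀ hqm (by positivity : (0:ℝ) < q ^ 2 * m)]
    nlinarith [mul_lt_mul_of_pos_right hcross hqm]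
  refine ⟨goal1, ?_⟩
  -- notation
  set N := ‖xk - x‖ ^ 2 with hN_def
  set s : Fin m → ℝ := fun i => ⟪a i, xk - x⟫ with hs_def
  set r : Fin m → ℝ := fun i => ⟪a i, xk⟫ - b i with hr_def
  clear_value N s r
  have hsb : ∀ i, s i = ⟪a i, xk⟫ - bt i := by
    intro i
    rw [hs_def]
    simp only [inner_sub_right, hbt i]
  have hr_s : ∀ i ∉ C, r i = s i := by
    intro i hi
    simp only [hr_def]
    rw [hb i hi]
    exact (hsb i).symm
  have hmemB : ∀ i, i ∈ B ↔ |r i| ≤ Q := by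
    intro i
    rw [hBdef]
    simp [Finset.mem_filter, hr_def]
  have hBpos : (0:ℝ) < B.card := by rw [hBcard]; exact hqm
  have hQ0 : 0 ≤ Q := by
    obtain ⟨i, hi⟩ := Finset.card_pos.1 (by exact_mod_cast hBpos)
    exact le_trans (abs_nonneg _) ((hmemB i).1 hi)
  have hxkx : xk - x ≠ 0 := by
    intro h0
    have hxx : xk = x := sub_eq_zero.1 h0
    have hsub : univ \ C ⊆ B := by
      intro i hi
      rw [Finset.mem_sdiff] at hi
      rw [hmemB]
      have hri : r i = 0 := by
        rw [hr_def]
        simp only [hxx, hbt i, hb i hi.2, sub_self]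
      rw [hri]
      simpa using hQ0
    have hcard := Finset.card_le_card hsub
    have hCm : C.card ≤ m := by
      simpa using Finset.card_le_card (Finset.subset_univ C)
    have h1 : (univ \ C).card = m - C.card := by
      rw [Finset.card_sdiff_of_subset (Finset.subset_univ C), Finset.card_univ, Fintype.card_fin]
    rw [h1] at hcard
    have h2 : ((m - C.card : ℕ) : ℝ) ≤ (B.card : ℝ) := Nat.cast_le.2 hcard
    rw [Nat.cast_sub hCm, hBcard] at h2
    nlinarith
  have hNpos : 0 < N := by rw [hN_def]; exact pow_pos (norm_pos_iff.2 hxkx) 2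
  -- the per-step expansion
  have hterm : ∀ i, ‖xk + (b i - ⟪a i, xk⟫) • a i - x‖ ^ 2
      = N - 2 * (r i * s i) + r i ^ 2 := by
    intro i
    have hx1 : xk + (b i - ⟪a i, xk⟫) • a i - x = (xk - x) - r i • a i := by
      have hsc : b i - ⟪a i, xk⟫ = -(r i) := by rw [hr_def]; ring
      rw [hsc, neg_smul]
      abel
    rw [hx1, norm_sub_sq_real]
    have h2 : ⟪xk - x, r i • a i⟫ = r i * s i := by
      rw [real_inner_smul_right, real_inner_comm, hs_def]
    have h3 : ‖r i • a i‖ ^ 2 = r i ^ 2 := by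
      rw [norm_smul, ha i, mul_one, Real.norm_eq_abs, sq_abs]
    rw [h2, h3, hN_def]
  -- lower bound on the good part
  have hBC1 : ⌈(q - β) * m⌉₊ ≤ (B \ C).card := by
    have h2 : B.card ≤ (B \ C).card + C.card := Finset.card_le_card_sdiff_add_card
    have h3 : (B.card : ℝ) ≤ ((B \ C).card : ℝ) + C.card := by exact_mod_cast h2
    apply Nat.ceil_le.2
    rw [hBcard] at h3
    linarith
  obtain ⟨S, hSsub, hScard⟩ := Finset.exists_subset_card_eq hBC1
  have hσsum : σ2 * N ≤ ∑ i ∈ B \ C, s i ^ 2 := by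
    have h0 := sigmaRMin_bound a (xk - x) S _ hScard
    rw [← hσ2_def, ← hN_def] at h0
    refine le_trans h0 ?_
    refine le_trans (le_of_eq ?_)
      (Finset.sum_le_sum_of_subset_of_nonneg hSsub (fun i _ _ => sq_nonneg _))
    apply Finset.sum_congr rfl
    intro i _
    rw [hs_def]
  -- Σ bound on any subset
  have hSgbound : ∀ T : Finset (Fin m), ∑ i ∈ T, s i ^ 2 ≤ Sg2 * N := by
    intro T
    have := sigmaMax_bound a ha (xk - x) T
    rw [← hSg2_def, ← hN_def] at this
    refine le_trans (le_of_eq ?_) this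
    apply Finset.sum_congr rfl
    intro i _
    rw [hs_def]
  -- quantile bound on Q
  set D := (univ \ B) \ C with hD_def
  clear_value D
  have hDcard : (1 - q - β) * m ≤ (D.card : ℝ) := by
    have hBm : B.card ≤ m := by simpa using Finset.card_le_card (Finset.subset_univ B)
    have h1 : (univ \ B).card = m - B.card := by
      rw [Finset.card_sdiff_of_subset (Finset.subset_univ B), Finset.card_univ, Fintype.card_fin]
    have h2 : (univ \ B).card ≤ D.card + C.card := by
      rw [hD_def]; exact Finset.card_le_card_sdiff_add_card
    rw [h1] at h2
    have h3 : ((m - B.card : ℕ) : ℝ) ≤ (D.card : ℝ) + C.card := by exact_mod_cast h2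
    rw [Nat.cast_sub hBm, hBcard] at h3
    linarith
  have hQ2 : Q ^ 2 * ((1 - q - β) * m) ≤ Sg2 * N := by
    have hQD : ∀ i ∈ D, Q ^ 2 ≤ s i ^ 2 := by
      intro i hi
      rw [hD_def, Finset.mem_sdiff, Finset.mem_sdiff] at hi
      obtain ⟨⟨-, hiB⟩, hiC⟩ := hi
      have h5 : Q < |r i| := lt_of_not_ge (fun h => hiB ((hmemB i).2 h))
      have h6 : Q ^ 2 ≤ |r i| ^ 2 := pow_le_pow_left₀ hQ0 h5.le 2
      rw [sq_abs, hr_s i hiC] at h6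
      exact h6
    have h7 : (D.card : ℝ) * Q ^ 2 ≤ ∑ i ∈ D, s i ^ 2 := by
      calc (D.card : ℝ) * Q ^ 2 = ∑ _i ∈ D, Q ^ 2 := by rw [Finset.sum_const, nsmul_eq_mul]
        _ ≤ ∑ i ∈ D, s i ^ 2 := Finset.sum_le_sum hQD
    have h9 := mul_le_mul_of_nonneg_right hDcard (sq_nonneg Q)
    linarith [hSgbound D, h7, h9]
  have hμ : (0:ℝ) < (1 - q - β) * m := mul_pos h1qβ hmR
  have hQ2' : Q ^ 2 ≤ Sg2 * N / ((1 - q - β) * m) := (le_div_iff₀ hμ).2 hQ2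
  -- corruption bound
  set t := ∑ i ∈ B ∩ C, |s i| with ht_def
  have htnn : 0 ≤ t := ht_def ▸ Finset.sum_nonneg fun i _ => abs_nonneg _
  clear_value t
  have hcardBC : ((B ∩ C).card : ℝ) ≤ β * m :=
    le_trans (Nat.cast_le.2 (Finset.card_le_card (Finset.inter_subset_right))) hC
  have hCS : t ^ 2 ≤ (β * m) * (Sg2 * N) := by
    have hcs := Finset.sum_mul_sq_le_sq_mul_sq (B ∩ C) (fun _ => (1:ℝ)) (fun i => |s i|)
    simp only [one_pow, one_mul, sq_abs, Finset.sum_const, nsmul_eq_mul, mul_one] at hcs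
    rw [← ht_def] at hcs
    have hP := hSgbound (B ∩ C)
    have hPn : (0:ℝ) ≤ ∑ i ∈ B ∩ C, s i ^ 2 := Finset.sum_nonneg fun i _ => sq_nonneg _
    have h10 : ((B ∩ C).card : ℝ) * (∑ i ∈ B ∩ C, s i ^ 2) ≤ (β * m) * (Sg2 * N) :=
      mul_le_mul hcardBC hP hPn (mul_nonneg hβ.le hmR.le)
    linarith
  have hsum3 : ∑ i ∈ B ∩ C, (r i ^ 2 - 2 * (r i * s i))
      ≤ ((B ∩ C).card : ℝ) * Q ^ 2 + 2 * Q * t := by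
    have hpt : ∀ i ∈ B ∩ C, r i ^ 2 - 2 * (r i * s i) ≤ Q ^ 2 + 2 * Q * |s i| := by
      intro i hi
      have hri : |r i| ≤ Q := (hmemB i).1 (Finset.mem_of_mem_inter_left hi)
      have h1 : r i ^ 2 ≤ Q ^ 2 := by
        have := pow_le_pow_left₀ (abs_nonneg (r i)) hri 2
        rwa [sq_abs] at this
      have h2 : -(2 * (r i * s i)) ≤ 2 * Q * |s i| := by
        calc -(2 * (r i * s i)) = 2 * (-(r i * s i)) := by ring
          _ ≤ 2 * |r i * s i| := by
              have := neg_le_abs (r i * s i)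
              linarith
          _ = 2 * (|r i| * |s i|) := by rw [abs_mul]
          _ ≤ 2 * (Q * |s i|) := by
              have := mul_le_mul_of_nonneg_right hri (abs_nonneg (s i))
              linarith
          _ = 2 * Q * |s i| := by ring
      linarith
    calc ∑ i ∈ B ∩ C, (r i ^ 2 - 2 * (r i * s i))
        ≤ ∑ i ∈ B ∩ C, (Q ^ 2 + 2 * Q * |s i|) := Finset.sum_le_sum hpt
      _ = ((B ∩ C).card : ℝ) * Q ^ 2 + 2 * Q * t := by
          rw [Finset.sum_add_distrib, Finset.sum_const, nsmul_eq_mul, ht_def,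
            ← Finset.mul_sum]
  -- sqrt estimates
  have hW : 0 ≤ Sg2 * N := mul_nonneg hSg2nn hNpos.le
  have hQle : Q ≤ Real.sqrt (Sg2 * N / ((1 - q - β) * m)) := by
    calc Q = Real.sqrt (Q ^ 2) := (Real.sqrt_sq hQ0).symm
      _ ≤ _ := Real.sqrt_le_sqrt hQ2'
  have htle : t ≤ Real.sqrt ((β * m) * (Sg2 * N)) := by
    calc t = Real.sqrt (t ^ 2) := (Real.sqrt_sq htnn).symm
      _ ≤ _ := Real.sqrt_le_sqrt hCS
  have hQt : 2 * Q * t ≤ Sg2 * N * (2 * Real.sqrt β / Real.sqrt (1 - q - β)) := by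
    have h1 : Q * t ≤ Real.sqrt (Sg2 * N / ((1 - q - β) * m)) *
        Real.sqrt ((β * m) * (Sg2 * N)) :=
      mul_le_mul hQle htle htnn (Real.sqrt_nonneg _)
    have h2 : Real.sqrt (Sg2 * N / ((1 - q - β) * m)) * Real.sqrt ((β * m) * (Sg2 * N))
        = Real.sqrt ((Sg2 * N / ((1 - q - β) * m)) * ((β * m) * (Sg2 * N))) :=
      (Real.sqrt_mul (by positivity) _).symm
    have h3 : (Sg2 * N / ((1 - q - β) * m)) * ((β * m) * (Sg2 * N))
        = (Sg2 * N) ^ 2 * (β / (1 - q - β)) := by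
      field_simp
    have h4 : Real.sqrt ((Sg2 * N) ^ 2 * (β / (1 - q - β)))
        = (Sg2 * N) * (Real.sqrt β / Real.sqrt (1 - q - β)) := by
      rw [Real.sqrt_mul (sq_nonneg _), Real.sqrt_sq hW, Real.sqrt_div hβ.le]
    rw [h2, h3, h4] at h1
    calc 2 * Q * t = 2 * (Q * t) := by ring
      _ ≤ 2 * ((Sg2 * N) * (Real.sqrt β / Real.sqrt (1 - q - β))) := by linarith
      _ = Sg2 * N * (2 * Real.sqrt β / Real.sqrt (1 - q - β)) := by ring
  have hβQ : ((B ∩ C).card : ℝ) * Q ^ 2 ≤ Sg2 * N * (β / (1 - q - β)) := by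
    have h5 : ((B ∩ C).card : ℝ) * Q ^ 2 ≤ (β * m) * Q ^ 2 :=
      mul_le_mul_of_nonneg_right hcardBC (sq_nonneg _)
    have h6 : (β * m) * Q ^ 2 ≤ (β * m) * (Sg2 * N / ((1 - q - β) * m)) :=
      mul_le_mul_of_nonneg_left hQ2' (by positivity)
    have h7 : (β * m) * (Sg2 * N / ((1 - q - β) * m)) = Sg2 * N * (β / (1 - q - β)) := by
      field_simp
    linarith [h7 ▸ h6]
  have h3total : ∑ i ∈ B ∩ C, (r i ^ 2 - 2 * (r i * s i)) ≤ Sg2 * N * Eε := by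
    rw [hEε_def, mul_add]
    linarith
  -- assemble the total sum
  have hcards : ((B \ C).card : ℝ) + ((B ∩ C).card : ℝ) = (B.card : ℝ) := by
    exact_mod_cast Finset.card_sdiff_add_card_inter B C
  have hmain : ∑ i ∈ B, ‖xk + (b i - ⟪a i, xk⟫) • a i - x‖ ^ 2
      ≤ (B.card : ℝ) * N - σ2 * N + Sg2 * N * Eε := by
    rw [sum_split_sdiff_inter B C]
    have hA : ∑ i ∈ B \ C, ‖xk + (b i - ⟪a i, xk⟫) • a i - x‖ ^ 2
        = ((B \ C).card : ℝ) * N - ∑ i ∈ B \ C, s i ^ 2 := by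
      have heq : ∑ i ∈ B \ C, ‖xk + (b i - ⟪a i, xk⟫) • a i - x‖ ^ 2
          = ∑ i ∈ B \ C, (N - s i ^ 2) := by
        apply Finset.sum_congr rfl
        intro i hi
        have hiC : i ∉ C := (Finset.mem_sdiff.1 hi).2
        rw [hterm i, hr_s i hiC]
        ring
      rw [heq, Finset.sum_sub_distrib, Finset.sum_const, nsmul_eq_mul]
    have hB2 : ∑ i ∈ B ∩ C, ‖xk + (b i - ⟪a i, xk⟫) • a i - x‖ ^ 2
        = ((B ∩ C).card : ℝ) * N + ∑ i ∈ B ∩ C, (r i ^ 2 - 2 * (r i * s i)) := by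
      have heq : ∑ i ∈ B ∩ C, ‖xk + (b i - ⟪a i, xk⟫) • a i - x‖ ^ 2
          = ∑ i ∈ B ∩ C, (N + (r i ^ 2 - 2 * (r i * s i))) := by
        apply Finset.sum_congr rfl
        intro i _
        rw [hterm i]
        ring
      rw [heq, Finset.sum_add_distrib, Finset.sum_const, nsmul_eq_mul]
    rw [hA, hB2]
    have hcN : ((B \ C).card : ℝ) * N + ((B ∩ C).card : ℝ) * N = (B.card : ℝ) * N := by
      rw [← add_mul, hcards]
    linarith [hσsum, h3total]
  -- finish
  have hq0 : q ≠ 0 := ne_of_gt hqpos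
  have hm0 : (m : ℝ) ≠ 0 := ne_of_gt hmR
  have hstep : (1 / (B.card : ℝ)) * ∑ i ∈ B, ‖xk + (b i - ⟪a i, xk⟫) • a i - x‖ ^ 2
      ≤ (1 / (B.card : ℝ)) * ((B.card : ℝ) * N - σ2 * N + Sg2 * N * Eε) :=
    mul_le_mul_of_nonneg_left hmain (by positivity)
  refine le_trans hstep ?_
  rw [hBcard]
  have key : (1 - ((q - β) * σ2 / (q ^ 2 * m) - Sg2 / (q * m) * Eε)) * N
      - (1 / (q * m)) * ((q * m) * N - σ2 * N + Sg2 * N * Eε) = σ2 * N * β / (q ^ 2 * m) := by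
    field_simp
    ring
  have hpos : 0 ≤ σ2 * N * β / (q ^ 2 * m) := by positivity
  linarith
end
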